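/- Let 𝒫 be a set of prime numbers and let C = ℤ[𝒫⁻¹] be the subring of ℚ generated by {1/p : p ∈ 𝒫}, regarded as an additive abelian group. If B is an abelian group that is p-divisible for every p ∈ 𝒫, then every normalized 2-cocycle Ω : C × C → B is a coboundary, i.e., H²(C,B) = 0. -/

import Mathlib

/-- The subring `ℤ[𝒫⁻¹]` of `ℚ` generated by the inverses of the primes in `𝒫`. -/
noncomputable def PRing (P : Set ℕ) : Subring ℚ :=
  Subring.closure {x : ℚ | ∃ p ∈ P, x = (p : ℚ)⁻¹}

/-- A normalized 2-cocycle on an (additive) abelian group `A` with values in `B`. -/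
def IsAddCocycle {A B : Type*} [AddCommGroup A] [AddCommGroup B] (Ω : A → A → B) : Prop :=
  (∀ a b c, Ω a b + Ω (a + b) c = Ω a (b + c) + Ω b c) ∧
  (∀ a, Ω a 0 = 0) ∧ (∀ a, Ω 0 a = 0)

/-- A 2-coboundary on an (additive) abelian group `A` with values in `B`. -/
def IsAddCoboundary {A B : Type*} [AddCommGroup A] [AddCommGroup B] (Ω : A → A → B) : Prop :=
  ∃ F : A → B, F 0 = 0 ∧ ∀ a b, Ω a b = F a + F b - F (a + b)



section SigDefs

variable {A B : Type*} [AddCommGroup A] [AddCommGroup B]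

private lemma zsmul_add_one' (u : A) (a : ℤ) : a • u + u = (a + 1) • u := by
  rw [add_zsmul, one_zsmul]

def sigP (Ω : A → A → B) (u : A) : ℕ → B
  | 0 => 0
  | n+1 => sigP Ω u n + Ω ((n : ℤ) • u) u

def sigM (Ω : A → A → B) (u : A) : ℕ → B
  | 0 => 0
  | m+1 => sigM Ω u m - Ω ((-(m+1) : ℤ) • u) u

def sigI (Ω : A → A → B) (u : A) : ℤ → B
  | Int.ofNat n => sigP Ω u n
  | Int.negSucc m => sigM Ω u (m+1)

lemma sigI_zero (Ω : A → A → B) (u : A) : sigI Ω u 0 = 0 := rfl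

lemma sigI_step (Ω : A → A → B) (u : A) (k : ℤ) :
    sigI Ω u (k + 1) = sigI Ω u k + Ω (k • u) u := by
  rcases k with n | m
  · rw [show (Int.ofNat n) + 1 = Int.ofNat (n+1) by rfl]
    show sigP Ω u (n+1) = sigP Ω u n + Ω ((Int.ofNat n) • u) u
    rfl
  · rcases m with _ | m
    · rw [show (Int.negSucc 0) + 1 = (0 : ℤ) by rfl]
      show sigP Ω u 0 = (sigM Ω u 0 - Ω ((-(0+1) : ℤ) • u) u) + Ω ((Int.negSucc 0) • u) u
      rw [show ((-(0+1) : ℤ)) = Int.negSucc 0 by rfl]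
      show (0 : B) = (0 - Ω ((Int.negSucc 0) • u) u) + Ω ((Int.negSucc 0) • u) u
      abel
    · rw [show (Int.negSucc (m+1)) + 1 = Int.negSucc m by
        rw [Int.negSucc_eq, Int.negSucc_eq]; push_cast; ring]
      show sigM Ω u (m+1) = (sigM Ω u (m+1) - Ω ((-((m+1)+1) : ℤ) • u) u)
        + Ω ((Int.negSucc (m+1)) • u) u
      rw [show ((-((m+1)+1) : ℤ)) = Int.negSucc (m+1) by rw [Int.negSucc_eq]; push_cast; ring]
      abel

lemma sigI_add {Ω : A → A → B} (hΩ : IsAddCocycle Ω) (u : A) (j k : ℤ) :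
    sigI Ω u (j + k) = sigI Ω u j + sigI Ω u k + Ω (j • u) (k • u) := by
  obtain ⟨hc, hr, hl⟩ := hΩ
  induction k using Int.induction_on with
  | zero => simp [sigI_zero, hr]
  | succ i ih =>
      have h1 := sigI_step Ω u (j + (i:ℤ))
      rw [show j + (i:ℤ) + 1 = j + ((i:ℤ) + 1) by ring] at h1
      have h2 := sigI_step Ω u (i:ℤ)
      have hco := hc (j • u) ((i:ℤ) • u) u
      rw [← add_zsmul, zsmul_add_one'] at hco
      rw [h1, ih, h2]
      have hco' : Ω (j • u) (((i:ℤ) + 1) • u) = Ω (j • u) ((i:ℤ) • u)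
          + Ω ((j + (i:ℤ)) • u) u - Ω ((i:ℤ) • u) u := by
        rw [eq_sub_iff_add_eq]; exact hco.symm
      rw [hco']; abel
  | pred i ih =>
      have h1 := sigI_step Ω u (j + (-(i:ℤ) - 1))
      rw [show j + (-(i:ℤ) - 1) + 1 = j + -(i:ℤ) by ring] at h1
      have h2 := sigI_step Ω u (-(i:ℤ) - 1)
      rw [show -(i:ℤ) - 1 + 1 = -(i:ℤ) by ring] at h2
      have hco := hc (j • u) ((-(i:ℤ) - 1) • u) u
      rw [← add_zsmul, zsmul_add_one',
        show -(i:ℤ) - 1 + 1 = -(i:ℤ) by ring] at hco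
      have h3 : sigI Ω u (j + (-(i:ℤ) - 1)) = sigI Ω u j + sigI Ω u (-(i:ℤ))
          + Ω (j • u) ((-(i:ℤ)) • u) - Ω ((j + (-(i:ℤ) - 1)) • u) u := by
        rw [eq_sub_iff_add_eq, ← h1]; exact ih
      rw [h3, h2]
      have hco' : Ω (j • u) ((-(i:ℤ)) • u) = Ω (j • u) ((-(i:ℤ) - 1) • u)
          + Ω ((j + (-(i:ℤ) - 1)) • u) u - Ω ((-(i:ℤ) - 1) • u) u := by
        rw [eq_sub_iff_add_eq]; exact hco.symm
      rw [hco']; abel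

lemma sigI_smul {Ω : A → A → B} (hΩ : IsAddCocycle Ω) (u : A) (d k : ℤ) :
    sigI Ω (d • u) k = sigI Ω u (k * d) - k • sigI Ω u d := by
  induction k using Int.induction_on with
  | zero => simp [sigI_zero]
  | succ i ih =>
      have h1 := sigI_step Ω (d • u) (i:ℤ)
      rw [smul_smul] at h1
      have h2 := sigI_add hΩ u ((i:ℤ) * d) d
      rw [show (i:ℤ) * d + d = ((i:ℤ) + 1) * d by ring] at h2
      rw [h1, ih, h2, add_zsmul, one_zsmul]
      abel
  | pred i ih =>
      have h1 := sigI_step Ω (d • u) (-(i:ℤ) - 1)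
      rw [show -(i:ℤ) - 1 + 1 = -(i:ℤ) by ring, smul_smul] at h1
      have h2 := sigI_add hΩ u ((-(i:ℤ) - 1) * d) d
      rw [show (-(i:ℤ) - 1) * d + d = -(i:ℤ) * d by ring] at h2
      have h1' : sigI Ω (d • u) (-(i:ℤ) - 1) = sigI Ω (d • u) (-(i:ℤ))
          - Ω (((-(i:ℤ) - 1) * d) • u) (d • u) := by
        rw [eq_sub_iff_add_eq]; exact h1.symm
      rw [h1', ih, h2, sub_zsmul, one_zsmul]
      abel

end SigDefs


section PNum

variable {P : Set ℕ}

lemma pnum_pos (hP : ∀ p ∈ P, p.Prime) {n : ℕ} (hn : n ∈ Submonoid.closure P) : 0 < n := by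
  induction hn using Submonoid.closure_induction with
  | mem x hx => exact (hP x hx).pos
  | one => norm_num
  | mul a b ha hb iha ihb => exact Nat.mul_pos iha ihb

lemma inv_mem_pring {n : ℕ} (hn : n ∈ Submonoid.closure P) : ((n : ℚ))⁻¹ ∈ PRing P := by
  induction hn using Submonoid.closure_induction with
  | mem x hx => exact Subring.subset_closure ⟨x, hx, rfl⟩
  | one => simpa using Subring.one_mem (PRing P)
  | mul a b ha hb iha ihb =>
      push_cast
      rw [mul_inv]
      exact mul_mem iha ihb

lemma prime_mem_of_dvd (hP : ∀ p ∈ P, p.Prime) {n : ℕ} (hn : n ∈ Submonoid.closure P) :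
    ∀ q : ℕ, q.Prime → q ∣ n → q ∈ P := by
  induction hn using Submonoid.closure_induction with
  | mem x hx =>
      intro q hq hd
      have := (Nat.prime_dvd_prime_iff_eq hq (hP x hx)).mp hd
      subst this; exact hx
  | one => intro q hq hd; exact absurd (Nat.dvd_one.mp hd) hq.ne_one
  | mul a b ha hb iha ihb =>
      intro q hq hd
      rcases (Nat.Prime.dvd_mul hq).mp hd with h | h
      exacts [iha q hq h, ihb q hq h]

lemma mem_closure_of_primes {n : ℕ} (hn : n ≠ 0) (h : ∀ q : ℕ, q.Prime → q ∣ n → q ∈ P) :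
    n ∈ Submonoid.closure P := by
  rw [← Nat.prod_primeFactorsList hn]
  exact list_prod_mem fun q hq => Submonoid.subset_closure
    (h q (Nat.prime_of_mem_primeFactorsList hq) (Nat.dvd_of_mem_primeFactorsList hq))

lemma mem_closure_of_dvd (hP : ∀ p ∈ P, p.Prime) {m n : ℕ} (hd : m ∣ n)
    (hn : n ∈ Submonoid.closure P) : m ∈ Submonoid.closure P := by
  have hn0 : n ≠ 0 := (pnum_pos hP hn).ne'
  have hm0 : m ≠ 0 := by rintro rfl; exact hn0 (Nat.eq_zero_of_zero_dvd hd)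
  exact mem_closure_of_primes hm0 fun q hq hqd =>
    prime_mem_of_dvd hP hn q hq (hqd.trans hd)

lemma pring_repr (hP : ∀ p ∈ P, p.Prime) {x : ℚ} (hx : x ∈ PRing P) :
    ∃ (k : ℤ) (m : ℕ), m ∈ Submonoid.closure P ∧ x = (k : ℚ) / (m : ℚ) := by
  induction hx using Subring.closure_induction with
  | mem x hx =>
      obtain ⟨p, hp, rfl⟩ := hx
      exact ⟨1, p, Submonoid.subset_closure hp, by push_cast; rw [one_div]⟩
  | zero => exact ⟨0, 1, one_mem _, by simp⟩
  | one => exact ⟨1, 1, one_mem _, by simp⟩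
  | add x y hx hy ihx ihy =>
      obtain ⟨k1, m1, hm1, rfl⟩ := ihx
      obtain ⟨k2, m2, hm2, rfl⟩ := ihy
      refine ⟨k1 * m2 + k2 * m1, m1 * m2, mul_mem hm1 hm2, ?_⟩
      have h1 : (m1 : ℚ) ≠ 0 := by exact_mod_cast (pnum_pos hP hm1).ne'
      have h2 : (m2 : ℚ) ≠ 0 := by exact_mod_cast (pnum_pos hP hm2).ne'
      push_cast
      field_simp
  | neg x hx ihx =>
      obtain ⟨k, m, hm, rfl⟩ := ihx
      exact ⟨-k, m, hm, by push_cast; ring⟩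
  | mul x y hx hy ihx ihy =>
      obtain ⟨k1, m1, hm1, rfl⟩ := ihx
      obtain ⟨k2, m2, hm2, rfl⟩ := ihy
      refine ⟨k1 * k2, m1 * m2, mul_mem hm1 hm2, ?_⟩
      push_cast
      rw [div_mul_div_comm]

open Classical in
/-- A cofinal (for divisibility) increasing chain of `𝒫`-numbers. -/
noncomputable def chainN (P : Set ℕ) (K : ℕ) : ℕ :=
  ∏ p ∈ (Finset.range (K+1)).filter (fun p => p ∈ P), p ^ K

lemma chainN_mem (K : ℕ) : chainN P K ∈ Submonoid.closure P := by
  unfold chainN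
  classical
  exact prod_mem fun p hp => pow_mem (Submonoid.subset_closure (Finset.mem_filter.mp hp).2) _

lemma chainN_dvd_succ (K : ℕ) : chainN P K ∣ chainN P (K+1) := by
  unfold chainN
  classical
  refine dvd_trans (Finset.prod_dvd_prod_of_dvd _ _ fun p _ => pow_dvd_pow p (Nat.le_succ K))
    (Finset.prod_dvd_prod_of_subset _ _ _ ?_)
  exact Finset.filter_subset_filter _ (Finset.range_subset_range.mpr (by omega))

lemma chainN_dvd_mono {K L : ℕ} (h : K ≤ L) : chainN P K ∣ chainN P L := by
  induction L, h using Nat.le_induction with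
  | base => rfl
  | succ L hKL ih => exact ih.trans (chainN_dvd_succ L)

lemma dvd_chainN (hP : ∀ p ∈ P, p.Prime) {m : ℕ} (hm : m ∈ Submonoid.closure P) :
    m ∣ chainN P m := by
  unfold chainN
  classical
  have hm0 : m ≠ 0 := (pnum_pos hP hm).ne'
  conv_lhs => rw [← Nat.factorization_prod_pow_eq_self hm0]
  rw [Finsupp.prod]
  refine dvd_trans (Finset.prod_dvd_prod_of_dvd _ _ fun p _ =>
    pow_dvd_pow p (le_of_lt (Nat.factorization_lt p hm0)))
    (Finset.prod_dvd_prod_of_subset _ _ _ ?_)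
  intro p hp
  rw [Nat.support_factorization] at hp
  have hp' : p.Prime := Nat.prime_of_mem_primeFactors hp
  have hpd : p ∣ m := Nat.dvd_of_mem_primeFactors hp
  refine Finset.mem_filter.mpr ⟨Finset.mem_range.mpr ?_, prime_mem_of_dvd hP hm p hp' hpd⟩
  have := Nat.le_of_dvd (Nat.pos_of_ne_zero hm0) hpd
  omega

lemma pnum_smul_surj {B : Type*} [AddCommGroup B] (hdiv : ∀ p ∈ P, ∀ b : B, ∃ d : B, p • d = b)
    {n : ℕ} (hn : n ∈ Submonoid.closure P) : ∀ b : B, ∃ d : B, n • d = b := by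
  induction hn using Submonoid.closure_induction with
  | mem p hp => exact hdiv p hp
  | one => exact fun b => ⟨b, one_smul _ b⟩
  | mul a b ha hb iha ihb =>
      intro c
      obtain ⟨d1, hd1⟩ := iha c
      obtain ⟨d2, hd2⟩ := ihb d1
      exact ⟨d2, by rw [mul_smul, hd2, hd1]⟩

lemma exists_seq {β : Type*} (init : β) (R : ℕ → β → β → Prop) (h : ∀ K b, ∃ b', R K b b') :
    ∃ g : ℕ → β, g 0 = init ∧ ∀ K, R K (g K) (g (K+1)) := by
  choose step hstep using h
  exact ⟨fun K => Nat.rec init step K, rfl, fun K => hstep K _⟩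

end PNum

/-- For `C = ℤ[𝒫⁻¹]` and an abelian group `B` which is `p`-divisible for every `p ∈ 𝒫`,
every normalized 2-cocycle `Ω : C × C → B` is a coboundary, i.e. `H²(C,B) = 0`. -/
theorem secondCohomology_PRing_trivial (P : Set ℕ) (hP : ∀ p ∈ P, p.Prime)
    (B : Type*) [AddCommGroup B] (hdiv : ∀ p ∈ P, ∀ b : B, ∃ d : B, p • d = b)
    (Ω : ↥(PRing P) → ↥(PRing P) → B) (hΩ : IsAddCocycle Ω) :
    IsAddCoboundary Ω := by
  classical
  have hnpos : ∀ K, 0 < chainN P K := fun K => pnum_pos hP (chainN_mem K)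
  have hnQ : ∀ K, ((chainN P K : ℕ) : ℚ) ≠ 0 := fun K => by exact_mod_cast (hnpos K).ne'
  let U : ℕ → ↥(PRing P) := fun K => ⟨((chainN P K : ℕ) : ℚ)⁻¹, inv_mem_pring (chainN_mem K)⟩
  have hUcoe : ∀ K, ((U K : ℚ)) = ((chainN P K : ℕ) : ℚ)⁻¹ := fun K => rfl
  have hsmul : ∀ (j : ℤ) (c : ↥(PRing P)), ((j • c : ↥(PRing P)) : ℚ) = (j : ℚ) * (c : ℚ) := by
    intro j c
    have h : ((j • c : ↥(PRing P)) : ℚ) = j • (c : ℚ) := map_zsmul (PRing P).subtype j c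
    rw [h, zsmul_eq_mul]
  have hinj : ∀ K (j k : ℤ), j • U K = k • U K → j = k := by
    intro K j k h
    have h' : (j : ℚ) * (U K : ℚ) = (k : ℚ) * (U K : ℚ) := by
      rw [← hsmul, ← hsmul, h]
    have hU0 : ((U K : ℚ)) ≠ 0 := by rw [hUcoe]; exact inv_ne_zero (hnQ K)
    exact_mod_cast mul_right_cancel₀ hU0 h'
  let d : ℕ → ℕ := fun K => chainN P (K+1) / chainN P K
  have hdmul : ∀ K, chainN P K * d K = chainN P (K+1) := fun K =>
    Nat.mul_div_cancel' (chainN_dvd_succ K)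
  have hdmem : ∀ K, d K ∈ Submonoid.closure P := fun K =>
    mem_closure_of_dvd hP (Dvd.intro_left _ (hdmul K)) (chainN_mem (K+1))
  have hdQ : ∀ K, ((d K : ℕ) : ℚ) ≠ 0 := fun K => by
    exact_mod_cast (pnum_pos hP (hdmem K)).ne'
  have hUstep : ∀ K, U K = ((d K : ℕ) : ℤ) • U (K+1) := by
    intro K
    apply Subtype.ext
    rw [hsmul, hUcoe, hUcoe, ← hdmul K]
    push_cast
    rw [mul_inv]
    field_simp
    rw [mul_comm ((chainN P K : ℕ) : ℚ) _, ← div_div, div_self (hdQ K)]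
  obtain ⟨g, hg0, hgstep⟩ := exists_seq (0 : B)
    (fun K b b' => ((d K : ℕ) : ℤ) • b' = b - sigI Ω (U (K+1)) ((d K : ℕ) : ℤ))
    (fun K b => by
      obtain ⟨x, hx⟩ := pnum_smul_surj hdiv (hdmem K) (b - sigI Ω (U (K+1)) ((d K : ℕ) : ℤ))
      refine ⟨x, ?_⟩
      show ((d K : ℕ) : ℤ) • x = b - sigI Ω (U (K+1)) ((d K : ℕ) : ℤ)
      rw [natCast_zsmul]; exact hx)
  let f' : ℕ → ℤ → B := fun K k => k • g K + sigI Ω (U K) k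
  have hL1 : ∀ K (j k : ℤ), f' K (j + k) = f' K j + f' K k + Ω (j • U K) (k • U K) := by
    intro K j k
    show (j + k) • g K + sigI Ω (U K) (j + k)
      = (j • g K + sigI Ω (U K) j) + (k • g K + sigI Ω (U K) k) + Ω (j • U K) (k • U K)
    rw [sigI_add hΩ, add_zsmul]
    abel
  have hL2 : ∀ K (k : ℤ), f' K k = f' (K+1) (k * ((d K : ℕ) : ℤ)) := by
    intro K k
    have hs := sigI_smul hΩ (U (K+1)) ((d K : ℕ) : ℤ) k
    rw [← hUstep K] at hs
    have hg : g K = ((d K : ℕ) : ℤ) • g (K+1) + sigI Ω (U (K+1)) ((d K : ℕ) : ℤ) := by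
      rw [hgstep K]; abel
    show k • g K + sigI Ω (U K) k
      = (k * ((d K : ℕ) : ℤ)) • g (K+1) + sigI Ω (U (K+1)) (k * ((d K : ℕ) : ℤ))
    rw [hs, hg, smul_add, smul_smul]
    abel
  have hlift : ∀ K L, K ≤ L → ∀ j : ℤ, ∃ j' : ℤ, j • U K = j' • U L ∧ f' K j = f' L j' := by
    intro K L hKL
    induction L, hKL using Nat.le_induction with
    | base => exact fun j => ⟨j, rfl, rfl⟩
    | succ L hKL ih =>
        intro j
        obtain ⟨j', h1, h2⟩ := ih j
        refine ⟨j' * ((d L : ℕ) : ℤ), ?_, h2.trans (hL2 L j')⟩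
        rw [h1, hUstep L, smul_smul]
  have hwd : ∀ K L (j k : ℤ), j • U K = k • U L → f' K j = f' L k := by
    intro K L j k h
    obtain ⟨j', hj1, hj2⟩ := hlift K (max K L) (le_max_left _ _) j
    obtain ⟨k', hk1, hk2⟩ := hlift L (max K L) (le_max_right _ _) k
    rw [hj2, hk2]
    have : j' • U (max K L) = k' • U (max K L) := by rw [← hj1, ← hk1, h]
    rw [hinj _ _ _ this]
  have hrepex : ∀ c : ↥(PRing P), ∃ Kj : ℕ × ℤ, c = Kj.2 • U Kj.1 := by
    intro c
    obtain ⟨k, m, hm, hx⟩ := pring_repr hP c.2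
    obtain ⟨e, he⟩ := dvd_chainN hP hm
    refine ⟨(m, k * e), ?_⟩
    apply Subtype.ext
    rw [hsmul, hUcoe, hx, he]
    have hm0 : (m : ℚ) ≠ 0 := by exact_mod_cast (pnum_pos hP hm).ne'
    have he0 : e ≠ 0 := by
      rintro rfl
      rw [Nat.mul_zero] at he
      exact (hnpos m).ne' he
    have he0' : (e : ℚ) ≠ 0 := by exact_mod_cast he0
    push_cast
    field_simp
  choose rep hrep using hrepex
  refine ⟨fun c => - f' (rep c).1 (rep c).2, ?_, ?_⟩
  · show - f' (rep 0).1 (rep 0).2 = 0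
    have h := hwd (rep 0).1 (rep 0).1 (rep 0).2 0 (by rw [← hrep 0, zero_zsmul])
    rw [h]
    show -(((0:ℤ)) • g (rep 0).1 + sigI Ω (U (rep 0).1) 0) = 0
    rw [zero_zsmul, sigI_zero, add_zero, neg_zero]
  · intro a b
    show Ω a b = - f' (rep a).1 (rep a).2 + - f' (rep b).1 (rep b).2
      - - f' (rep (a+b)).1 (rep (a+b)).2
    set M := max (max (rep a).1 (rep b).1) (rep (a+b)).1 with hM
    obtain ⟨ja, ha1, ha2⟩ := hlift (rep a).1 M
      (le_trans (le_max_left _ _) (le_max_left _ _)) (rep a).2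
    obtain ⟨jb, hb1, hb2⟩ := hlift (rep b).1 M
      (le_trans (le_max_right _ _) (le_max_left _ _)) (rep b).2
    obtain ⟨jc, hc1, hc2⟩ := hlift (rep (a+b)).1 M (le_max_right _ _) (rep (a+b)).2
    have hae : a = ja • U M := (hrep a).trans ha1
    have hbe : b = jb • U M := (hrep b).trans hb1
    have hce : a + b = jc • U M := (hrep (a+b)).trans hc1
    have hsum : (ja + jb) • U M = jc • U M := by rw [add_zsmul, ← hae, ← hbe, ← hce]
    have hjc : ja + jb = jc := hinj _ _ _ hsum
    rw [ha2, hb2, hc2, ← hjc, hL1 M ja jb, hae, hbe]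
    abel
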